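/- Let k be a field of characteristic 0 with algebraic closure L, let I ⊆ k[x_1,…,x_n] be a zero-dimensional ideal, and let d be the number of points of V_L(I). If d ≥ 2, then there exists an integer i with 1 ≤ i ≤ n·d·(d−1)/2 such that the polynomial t = x_1 + i·x_2 + i²·x_3 + ⋯ + i^{n−1}·x_n separates V_L(I). -/

import Mathlib

/-- if the number `d` of points of `V_L(I)` satisfies `d ≥ 2`, then there is an
integer `i` with `1 ≤ i ≤ n·d·(d−1)/2` such that `t = x_1 + i·x_2 + i²·x_3 + ⋯ + i^{n−1}·x_n`
separates `V_L(I)`. -/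
theorem stmt_5 (k L : Type) [Field k] [CharZero k] [Field L] [Algebra k L]
    [IsAlgClosure k L] (n : ℕ) (I : Ideal (MvPolynomial (Fin n) k))
    [FiniteDimensional k (MvPolynomial (Fin n) k ⧸ I)]
    (d : ℕ) (hd : d = Nat.card {p : Fin n → L | ∀ f ∈ I, MvPolynomial.aeval p f = 0})
    (h2 : 2 ≤ d) :
    ∃ i : ℕ, 1 ≤ i ∧ i ≤ n * d * (d - 1) / 2 ∧
      Set.InjOn
        (fun p : Fin n → L =>
          MvPolynomial.aeval p
            (∑ j : Fin n, MvPolynomial.C ((i : k) ^ (j : ℕ)) * MvPolynomial.X j))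
        {p : Fin n → L | ∀ f ∈ I, MvPolynomial.aeval p f = 0} := by
  classical
  have hL : CharZero L := charZero_of_injective_algebraMap (algebraMap k L).injective
  set V : Set (Fin n → L) := {p | ∀ f ∈ I, MvPolynomial.aeval p f = 0} with hVdef
  -- V is finite
  have hVfin : Finite ↥V := by
    have hom_fin : Finite ((MvPolynomial (Fin n) k ⧸ I) →ₐ[k] L) := inferInstance
    refine Finite.of_injective
      (fun p : ↥V => Ideal.Quotient.liftₐ I (MvPolynomial.aeval (R := k) p.1)
        (fun a ha => p.2 a ha)) ?_
    intro p q hpq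
    have h' : ∀ j : Fin n, p.1 j = q.1 j := by
      intro j
      have := congrFun (congrArg (fun φ => φ.toFun) hpq)
        (Ideal.Quotient.mk I (MvPolynomial.X j))
      change MvPolynomial.aeval p.1 (MvPolynomial.X (R := k) j)
        = MvPolynomial.aeval q.1 (MvPolynomial.X (R := k) j) at this
      simpa using this
    exact Subtype.ext (funext h')
  have := Fintype.ofFinite ↥V
  -- n ≥ 1
  have hn : 1 ≤ n := by
    by_contra h
    have hn0 : n = 0 := by omega
    subst hn0
    have hsub : Subsingleton ↥V := ⟨fun a b => Subtype.ext (funext (fun j => j.elim0))⟩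
    have : Nat.card ↥V ≤ 1 := by
      rw [Nat.card_eq_fintype_card]
      exact Fintype.card_le_one_iff_subsingleton.mpr hsub
    omega
  have hcard : Fintype.card ↥V = d := by
    rw [hd, Nat.card_eq_fintype_card]
  set N : ℕ := n * d * (d - 1) / 2 with hNdef
  -- the separating linear form as a function of i
  have hteq : ∀ (i : ℕ) (p : Fin n → L),
      MvPolynomial.aeval p (∑ j : Fin n, MvPolynomial.C ((i : k) ^ (j : ℕ)) * MvPolynomial.X j)
        = ∑ j : Fin n, (i : L) ^ (j : ℕ) * p j := by
    intro i p
    rw [map_sum]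
    refine Finset.sum_congr rfl (fun j _ => ?_)
    simp [MvPolynomial.aeval_C, map_pow, map_natCast]
  -- pair polynomials
  set P : (Fin n → L) → (Fin n → L) → Polynomial L :=
    fun p q => ∑ j : Fin n, Polynomial.C (p j - q j) * Polynomial.X ^ (j : ℕ) with hPdef
  have hPcoeff : ∀ p q (j : Fin n), (P p q).coeff (j : ℕ) = p j - q j := by
    intro p q j
    rw [hPdef]
    simp only [Polynomial.finset_sum_coeff, Polynomial.coeff_C_mul, Polynomial.coeff_X_pow]
    rw [Finset.sum_eq_single j]
    · simp
    · intro b _ hb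
      have : ¬ ((j : ℕ) = (b : ℕ)) := fun h => hb (Fin.ext h.symm)
      simp [this]
    · simp
  have hPne : ∀ p q, p ≠ q → P p q ≠ 0 := by
    intro p q hpq h0
    apply hpq
    funext j
    have := hPcoeff p q j
    rw [h0] at this
    simp at this
    linear_combination (norm := ring_nf) this.symm
  have hPdeg : ∀ p q, (P p q).natDegree ≤ n - 1 := by
    intro p q
    rw [hPdef]
    refine Polynomial.natDegree_sum_le_of_forall_le _ _ (fun j _ => ?_)
    refine le_trans (Polynomial.natDegree_C_mul_le _ _) ?_
    rw [Polynomial.natDegree_X_pow]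
    omega
  have hPeval : ∀ p q (x : L), (P p q).eval x = ∑ j : Fin n, (p j - q j) * x ^ (j : ℕ) := by
    intro p q x
    rw [hPdef, Polynomial.eval_finset_sum]
    simp
  -- enumerate points
  set e : ↥V ≃ Fin d := Fintype.equivFinOfCardEq hcard with hedef
  set pt : Fin d → (Fin n → L) := fun a => (e.symm a : Fin n → L) with hptdef
  have hpt_inj : Function.Injective pt := fun a b h =>
    e.symm.injective (Subtype.coe_injective h)
  -- pairs
  set Q : Finset (Fin d × Fin d) := Finset.univ.filter (fun ab => ab.1 < ab.2) with hQdef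
  have hQcard : Q.card ≤ d * (d - 1) / 2 := by
    have himg : (Q.image Prod.swap).card = Q.card :=
      Finset.card_image_of_injective _ Prod.swap_injective
    have hdisj : Disjoint Q (Q.image Prod.swap) := by
      rw [Finset.disjoint_left]
      intro x hx hx'
      rw [hQdef, Finset.mem_filter] at hx
      rcases Finset.mem_image.mp hx' with ⟨y, hy, hxy⟩
      rw [hQdef, Finset.mem_filter] at hy
      rw [← hxy] at hx
      exact absurd hx.2 (not_lt.mpr (le_of_lt hy.2))
    have hsub : Q ∪ Q.image Prod.swap ⊆ Finset.univ.offDiag := by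
      intro x hx
      rw [Finset.mem_offDiag]
      rcases Finset.mem_union.mp hx with hx | hx
      · rw [hQdef, Finset.mem_filter] at hx
        exact ⟨Finset.mem_univ _, Finset.mem_univ _, ne_of_lt hx.2⟩
      · rcases Finset.mem_image.mp hx with ⟨y, hy, hxy⟩
        rw [hQdef, Finset.mem_filter] at hy
        rw [← hxy]
        exact ⟨Finset.mem_univ _, Finset.mem_univ _, (ne_of_lt hy.2).symm⟩
    have h2card : 2 * Q.card ≤ d * (d - 1) := by
      have := Finset.card_le_card hsub
      rw [Finset.card_union_of_disjoint hdisj, himg, Finset.offDiag_card,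
        Finset.card_univ, Fintype.card_fin] at this
      have hmul : d * (d - 1) = d * d - d := by
        cases d with
        | zero => simp
        | succ m => simp [Nat.mul_succ, Nat.succ_mul, Nat.succ_sub_one]
      omega
    omega
  -- bad i's for a pair
  set R : Fin d × Fin d → Finset ℕ :=
    fun ab => (Finset.Icc 1 N).filter
      (fun i => (P (pt ab.1) (pt ab.2)).eval ((i : ℕ) : L) = 0) with hRdef
  have hRcard : ∀ ab : Fin d × Fin d, ab.1 ≠ ab.2 → (R ab).card ≤ n - 1 := by
    intro ab hab
    have hne : P (pt ab.1) (pt ab.2) ≠ 0 := hPne _ _ (fun h => hab (hpt_inj h))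
    have hmaps : ∀ i ∈ R ab, ((i : ℕ) : L) ∈ (P (pt ab.1) (pt ab.2)).roots.toFinset := by
      intro i hi
      rw [hRdef, Finset.mem_filter] at hi
      rw [Multiset.mem_toFinset, Polynomial.mem_roots']
      exact ⟨hne, by simpa [Polynomial.IsRoot] using hi.2⟩
    calc (R ab).card ≤ (P (pt ab.1) (pt ab.2)).roots.toFinset.card := by
          refine Finset.card_le_card_of_injOn _ hmaps ?_
          exact fun a _ b _ h => Nat.cast_injective h
      _ ≤ Multiset.card (P (pt ab.1) (pt ab.2)).roots := Multiset.toFinset_card_le _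
      _ ≤ (P (pt ab.1) (pt ab.2)).natDegree := Polynomial.card_roots' _
      _ ≤ n - 1 := hPdeg _ _
  -- bad i's overall
  set B : Finset ℕ := (Finset.Icc 1 N).filter
    (fun i => ¬ Set.InjOn
      (fun p : Fin n → L =>
        MvPolynomial.aeval p
          (∑ j : Fin n, MvPolynomial.C ((i : k) ^ (j : ℕ)) * MvPolynomial.X j)) V) with hBdef
  have hBsub : B ⊆ Q.biUnion R := by
    intro i hiB
    rw [hBdef, Finset.mem_filter] at hiB
    obtain ⟨hiI, hnotinj⟩ := hiB
    rw [Set.InjOn] at hnotinj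
    push_neg at hnotinj
    obtain ⟨p, hp, q, hq, heq, hne⟩ := hnotinj
    have heq' : ∑ j : Fin n, (i : L) ^ (j : ℕ) * p j = ∑ j : Fin n, (i : L) ^ (j : ℕ) * q j := by
      rw [← hteq i p, ← hteq i q]; exact heq
    have key : ∀ (x y : ↥V),
        (∑ j : Fin n, (i : L) ^ (j : ℕ) * (x : Fin n → L) j)
          = (∑ j : Fin n, (i : L) ^ (j : ℕ) * (y : Fin n → L) j) →
        (P (pt (e x)) (pt (e y))).eval ((i : ℕ) : L) = 0 := by
      intro x y hxy
      rw [hPeval]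
      have h1 : pt (e x) = (x : Fin n → L) := by rw [hptdef]; simp
      have h2 : pt (e y) = (y : Fin n → L) := by rw [hptdef]; simp
      rw [h1, h2]
      rw [Finset.sum_congr rfl
        (fun j _ => sub_mul ((x : Fin n → L) j) ((y : Fin n → L) j) (((i:ℕ):L) ^ (j : ℕ))),
        Finset.sum_sub_distrib]
      rw [Finset.sum_congr rfl (fun j _ => mul_comm ((x : Fin n → L) j) (((i:ℕ):L)^(j:ℕ))),
        Finset.sum_congr (rfl : (Finset.univ : Finset (Fin n)) = Finset.univ)
          (fun j _ => mul_comm ((y : Fin n → L) j) (((i:ℕ):L)^(j:ℕ)))]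
      rw [hxy, sub_self]
    set xp : ↥V := ⟨p, hp⟩ with hxpdef
    set xq : ↥V := ⟨q, hq⟩ with hxqdef
    have heqV : (∑ j : Fin n, (i : L) ^ (j : ℕ) * (xp : Fin n → L) j)
        = (∑ j : Fin n, (i : L) ^ (j : ℕ) * (xq : Fin n → L) j) := heq'
    have hxne : e xp ≠ e xq := by
      intro h
      exact hne (congrArg Subtype.val (e.injective h))
    rcases lt_or_gt_of_ne hxne with hlt | hgt
    · refine Finset.mem_biUnion.mpr ⟨(e xp, e xq), ?_, ?_⟩
      · rw [hQdef, Finset.mem_filter]; exact ⟨Finset.mem_univ _, hlt⟩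
      · rw [hRdef, Finset.mem_filter]
        exact ⟨hiI, key xp xq heqV⟩
    · refine Finset.mem_biUnion.mpr ⟨(e xq, e xp), ?_, ?_⟩
      · rw [hQdef, Finset.mem_filter]; exact ⟨Finset.mem_univ _, hgt⟩
      · rw [hRdef, Finset.mem_filter]
        exact ⟨hiI, key xq xp heqV.symm⟩
  -- cardinality count
  have hBcard : B.card ≤ (d * (d - 1) / 2) * (n - 1) := by
    calc B.card ≤ (Q.biUnion R).card := Finset.card_le_card hBsub
      _ ≤ Q.card * (n - 1) := by
          refine Finset.card_biUnion_le_card_mul _ _ _ (fun ab hab => ?_)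
          rw [hQdef, Finset.mem_filter] at hab
          exact hRcard ab (ne_of_lt hab.2)
      _ ≤ (d * (d - 1) / 2) * (n - 1) := Nat.mul_le_mul_right _ hQcard
  have hNval : N = n * (d * (d - 1) / 2) := by
    rw [hNdef, mul_assoc]
    have heven : 2 ∣ d * (d - 1) := by
      rcases Nat.even_or_odd d with h | h
      · exact Dvd.dvd.mul_right h.two_dvd _
      · exact Dvd.dvd.mul_left (Nat.Odd.sub_odd h odd_one).two_dvd _
    exact Nat.mul_div_assoc n heven
  have hhalf : 1 ≤ d * (d - 1) / 2 := by
    have : 2 ≤ d * (d - 1) := by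
      calc 2 = 2 * 1 := by norm_num
        _ ≤ d * (d - 1) := Nat.mul_le_mul h2 (by omega)
    omega
  have hlt : B.card < (Finset.Icc 1 N).card := by
    rw [Nat.card_Icc]
    have : (d * (d - 1) / 2) * (n - 1) < N := by
      rw [hNval]
      calc (d * (d - 1) / 2) * (n - 1) = (n - 1) * (d * (d - 1) / 2) := mul_comm _ _
        _ < n * (d * (d - 1) / 2) := by
            apply Nat.mul_lt_mul_of_lt_of_le (by omega) (le_refl _)
            omega
    omega
  have hex : ∃ i ∈ Finset.Icc 1 N, i ∉ B := by
    by_contra h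
    push_neg at h
    exact absurd (Finset.card_le_card h) (not_le.mpr hlt)
  obtain ⟨i, hiI, hiB⟩ := hex
  rw [Finset.mem_Icc] at hiI
  refine ⟨i, hiI.1, hiI.2, ?_⟩
  by_contra hinj
  exact hiB (by rw [hBdef, Finset.mem_filter]; exact ⟨Finset.mem_Icc.mpr hiI, hinj⟩)
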